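/- For every constant C > 0 and τ = 1 − log(q)/(Cq), the q-ary entropy satisfies H_q(τ) ≤ 1 − log(log q)/(2Cq) for all sufficiently large q, and consequently the Gilbert–Varshamov bound gives A_q(K, τK) ≥ q^{K·log(log q)/(2Cq)}. -/

import Mathlib

open scoped BigOperators

open Finset

/-- The `q`-ary entropy function
`H_q(τ) = τ·log_q(q−1) − τ·log_q τ − (1−τ)·log_q(1−τ)`. -/
noncomputable def qaryEntropy (q : ℕ) (τ : ℝ) : ℝ :=
  τ * Real.logb q ((q : ℝ) - 1) - τ * Real.logb q τ - (1 - τ) * Real.logb q (1 - τ)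

lemma ball_card_le (q K r : ℕ) (hr : r ≤ K) (c : Fin K → Fin q) :
    (Finset.univ.filter (fun w : Fin K → Fin q => hammingDist w c ≤ r)).card
      ≤ K.choose r * q ^ r := by
  classical
  set B := Finset.univ.filter (fun w : Fin K → Fin q => hammingDist w c ≤ r) with hB
  set T : Finset ((Finset (Fin K)) × (Fin K → Fin q)) :=
    (Finset.univ.powersetCard r).sigma (fun D =>
      Fintype.piFinset (fun j => if j ∈ D then Finset.univ else {c j})) |>.map
      ⟨fun p => (p.1, p.2), fun a b h => by
        cases a; cases b; simpa [Sigma.mk.inj_iff] using h⟩ with hT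
  -- choose for each w a superset of its disagreement set of size exactly r
  have hsup : ∀ w ∈ B, ∃ D : Finset (Fin K),
      (Finset.univ.filter fun j => w j ≠ c j) ⊆ D ∧ D.card = r := by
    intro w hw
    simp only [hB, mem_filter, mem_univ, true_and] at hw
    obtain ⟨u, h1, _, h3⟩ := Finset.exists_subsuperset_card_eq (Finset.subset_univ _)
      (show (Finset.univ.filter fun j => w j ≠ c j).card ≤ r by simpa [hammingDist] using hw)
      (by simpa using hr)
    exact ⟨u, h1, h3⟩
  choose D hD1 hD2 using hsup
  have hcard : B.card ≤ T.card := by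
    apply Finset.card_le_card_of_injOn (fun w => if h : w ∈ B then (D w h, w) else (∅, w))
    · intro w hw
      simp only [Finset.mem_coe, hT, Finset.mem_map, Finset.mem_sigma]
      refine ⟨⟨D w hw, w⟩, ?_, (show (D w hw, w) = (if h : w ∈ B then (D w h, w) else (∅, w)) by
        rw [dif_pos (Finset.mem_coe.mp hw)])⟩
      simp only [Finset.mem_sigma, Finset.mem_powersetCard, Fintype.mem_piFinset]
      refine ⟨⟨Finset.subset_univ _, hD2 w hw⟩, ?_⟩
      intro j
      by_cases hj : j ∈ D w hw
      · simp [hj]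
      · have : ¬ (w j ≠ c j) := fun hne => hj (hD1 w hw (by simp [hne]))
        simp [hj, not_not.mp this]
    · intro a ha b hb hab
      have := congrArg Prod.snd hab
      simpa [apply_dite Prod.snd] using this
  have hTcard : T.card = K.choose r * q ^ r := by
    rw [hT, Finset.card_map, Finset.card_sigma]
    have : ∀ D ∈ Finset.univ.powersetCard r,
        (Fintype.piFinset (fun j => if j ∈ D then (Finset.univ : Finset (Fin q)) else {c j})).card
          = q ^ r := by
      intro D hD
      rw [Fintype.card_piFinset]
      have hDr : D.card = r := (Finset.mem_powersetCard.mp hD).2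
      calc ∏ j, (if j ∈ D then (Finset.univ : Finset (Fin q)) else {c j}).card
          = ∏ j, (if j ∈ D then q else 1) := by
            apply Finset.prod_congr rfl; intro j _; by_cases hj : j ∈ D <;> simp [hj]
        _ = q ^ r := by
            rw [Finset.prod_ite_mem, Finset.univ_inter, Finset.prod_const, hDr]
    rw [Finset.sum_congr rfl this, Finset.sum_const, smul_eq_mul,
      Finset.card_powersetCard, Finset.card_univ, Fintype.card_fin]
  omega

lemma exists_maximal_code (q K : ℕ) (d : ℝ) (hd : 0 < d) :
    ∃ Code : Finset (Fin K → Fin q),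
      (∀ u ∈ Code, ∀ v ∈ Code, u ≠ v → d ≤ (hammingDist u v : ℝ)) ∧
      ∀ w : Fin K → Fin q, ∃ c ∈ Code, (hammingDist w c : ℝ) < d := by
  classical
  set P : Finset (Fin K → Fin q) → Prop :=
    fun s => ∀ u ∈ s, ∀ v ∈ s, u ≠ v → d ≤ (hammingDist u v : ℝ) with hP
  set S : Finset (Finset (Fin K → Fin q)) := Finset.univ.filter P with hS
  have hSne : S.Nonempty := ⟨∅, by simp [hS, hP]⟩
  obtain ⟨s, hsS, hmax⟩ := S.exists_max_image Finset.card hSne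
  have hsP : P s := (Finset.mem_filter.mp hsS).2
  refine ⟨s, hsP, ?_⟩
  intro w
  by_contra hcon
  push_neg at hcon
  have hw : w ∉ s := by
    intro hws
    have := hcon w hws
    simp at this
    linarith
  have hins : P (insert w s) := by
    intro u hu v hv huv
    rcases Finset.mem_insert.mp hu with rfl | hu' <;>
      rcases Finset.mem_insert.mp hv with rfl | hv'
    · exact absurd rfl huv
    · exact hcon v hv'
    · rw [hammingDist_comm]; exact hcon u hu'
    · exact hsP u hu' v hv' huv
  have : (insert w s).card ≤ s.card :=
    hmax _ (Finset.mem_filter.mpr ⟨Finset.mem_univ _, hins⟩)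
  rw [Finset.card_insert_of_notMem hw] at this
  omega

lemma entropy_le (C : ℝ) (hC : 0 < C) (q : ℕ) (hq3 : 3 ≤ q)
    (hhalf : Real.log q / (C * q) ≤ 1/2)
    (hLbig : 2 * Real.log C + 4 ≤ Real.log (Real.log q)) :
    qaryEntropy q (1 - Real.log q / (C * q)) ≤
      1 - Real.log (Real.log q) / (2 * C * q) := by
  have hx3 : (3:ℝ) ≤ (q:ℝ) := by exact_mod_cast hq3
  have hx0 : (0:ℝ) < (q:ℝ) := by linarith
  set x : ℝ := (q:ℝ) with hxdef
  have hlogx : 1 < Real.log x := by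
    rw [Real.lt_log_iff_exp_lt hx0]
    calc Real.exp 1 < 2.7182818286 := Real.exp_one_lt_d9
      _ ≤ x := by linarith
  have hlogx0 : 0 < Real.log x := by linarith
  have hCx : 0 < C * x := by positivity
  set ε : ℝ := Real.log x / (C * x) with hεdef
  have hε0 : 0 < ε := by positivity
  have hε2 : ε ≤ 1/2 := hhalf
  have h1ε : (0:ℝ) < 1 - ε := by linarith
  set L : ℝ := Real.log (Real.log x) with hLdef
  -- log ε
  have hlogε : Real.log ε = L - (Real.log C + Real.log x) := by
    rw [hεdef, Real.log_div hlogx0.ne' hCx.ne', Real.log_mul hC.ne' hx0.ne', hLdef]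
  -- expand entropy
  have hexp : qaryEntropy q (1 - ε) =
      (1-ε) * (Real.log (x-1) / Real.log x) - (1-ε) * (Real.log (1-ε) / Real.log x)
        - ε * (Real.log ε / Real.log x) := by
    rw [qaryEntropy, Real.logb, Real.logb, Real.logb, ← hxdef]
    ring_nf
  -- term 1
  have e1 : (1-ε) * (Real.log (x-1) / Real.log x) ≤ 1 - ε := by
    have hlt : Real.log (x-1) ≤ Real.log x := Real.log_le_log (by linarith) (by linarith)
    have : Real.log (x-1) / Real.log x ≤ 1 := by
      rw [div_le_one hlogx0]; exact hlt
    nlinarith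
  -- term 2
  have hlogτ : -Real.log (1-ε) ≤ 2*ε := by
    have h := Real.one_sub_inv_le_log_of_pos h1ε
    have hinv : (1-ε)⁻¹ ≤ 1 + 2*ε := by
      rw [inv_eq_one_div, div_le_iff₀ h1ε]; nlinarith
    linarith
  have e2 : -((1-ε) * (Real.log (1-ε) / Real.log x)) ≤ 2 / (C * x) := by
    have h1 : -((1-ε) * (Real.log (1-ε) / Real.log x))
        = (1-ε) * (-Real.log (1-ε)) / Real.log x := by ring
    rw [h1]
    have hnn : 0 ≤ -Real.log (1-ε) := by
      have : Real.log (1-ε) ≤ 0 := Real.log_nonpos (by linarith) (by linarith)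
      linarith
    have h2 : (1-ε) * (-Real.log (1-ε)) ≤ 2*ε := by nlinarith
    calc (1-ε) * (-Real.log (1-ε)) / Real.log x ≤ 2*ε / Real.log x := by
          gcongr
      _ = 2 / (C * x) := by
          rw [hεdef]; field_simp
  -- term 3
  have e3 : -(ε * (Real.log ε / Real.log x)) = (Real.log C + Real.log x - L) / (C * x) := by
    rw [hlogε, hεdef]
    field_simp
    ring
  -- combine
  have hsum : qaryEntropy q (1 - ε) ≤
      (1 - ε) + 2 / (C*x) + (Real.log C + Real.log x - L) / (C*x) := by
    rw [hexp]; linarith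
  have hεrw : ε = Real.log x / (C*x) := hεdef
  have hfinal : (1 - ε) + 2 / (C*x) + (Real.log C + Real.log x - L) / (C*x)
      ≤ 1 - L / (2*C*x) := by
    rw [hεrw]
    have hy : (0:ℝ) < (C*x)⁻¹ := by positivity
    have key2 : (2 + Real.log C - L) * (C*x)⁻¹ ≤ (-(L/2)) * (C*x)⁻¹ :=
      mul_le_mul_of_nonneg_right (by linarith) hy.le
    have eq1 : 1 - Real.log x/(C*x) + 2/(C*x) + (Real.log C + Real.log x - L)/(C*x)
        = 1 + (2 + Real.log C - L) * (C*x)⁻¹ := by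
      field_simp
      ring
    have eq2 : 1 - L/(2*C*x) = 1 + (-(L/2))*(C*x)⁻¹ := by
      field_simp
      ring
    rw [eq1, eq2]
    linarith
  have : (2*C*(q:ℝ)) = 2*C*x := by rw [hxdef]
  calc qaryEntropy q (1 - ε) ≤ 1 - L / (2*C*x) := le_trans hsum hfinal
    _ = 1 - Real.log (Real.log ↑q) / (2 * C * ↑q) := by rw [hLdef, hxdef]

set_option maxHeartbeats 1000000 in
lemma gv_size (C : ℝ) (hC : 0 < C) (q K : ℕ) (hq3 : 3 ≤ q) (hK : 1 ≤ K)
    (hhalf : Real.log q / (C * q) ≤ 1/2)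
    (hLbig : 2 * Real.log C + 4 ≤ Real.log (Real.log q))
    (hbase : C * Real.exp 1 ≤ Real.log q) :
    ∃ Code : Finset (Fin K → Fin q),
      (∀ u ∈ Code, ∀ v ∈ Code, u ≠ v →
          (1 - Real.log q / (C * q)) * K ≤ (hammingDist u v : ℝ)) ∧
      (q : ℝ) ^ (((K : ℝ) * Real.log (Real.log q)) / (2 * C * q)) ≤ Code.card := by
  classical
  have hx3 : (3:ℝ) ≤ (q:ℝ) := by exact_mod_cast hq3
  have hx0 : (0:ℝ) < (q:ℝ) := by linarith
  set x : ℝ := (q:ℝ) with hxdef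
  have hlogx : 1 < Real.log x := by
    rw [Real.lt_log_iff_exp_lt hx0]
    calc Real.exp 1 < 2.7182818286 := Real.exp_one_lt_d9
      _ ≤ x := by linarith
  have hlogx0 : 0 < Real.log x := by linarith
  have hCx : 0 < C * x := by positivity
  set ε : ℝ := Real.log x / (C * x) with hεdef
  have hε0 : 0 < ε := by positivity
  have hε2 : ε ≤ 1/2 := hhalf
  set L : ℝ := Real.log (Real.log x) with hLdef
  set τ : ℝ := 1 - ε with hτdef
  have hτ0 : 0 < τ := by rw [hτdef]; linarith
  have hτ1 : τ ≤ 1 := by rw [hτdef]; linarith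
  have hK0 : (0:ℝ) < (K:ℝ) := by exact_mod_cast hK
  have hd : 0 < τ * (K:ℝ) := by positivity
  obtain ⟨Code, hCode, hcover⟩ := exists_maximal_code q K (τ * K) hd
  refine ⟨Code, hCode, ?_⟩
  -- radius
  set r : ℕ := ⌈τ * (K:ℝ)⌉₊ - 1 with hrdef
  have hceil1 : 1 ≤ ⌈τ * (K:ℝ)⌉₊ := Nat.one_le_ceil_iff.mpr hd
  have hr1 : (r:ℕ) + 1 = ⌈τ * (K:ℝ)⌉₊ := by omega
  have hrlt : (r:ℝ) < τ * K := by
    have h1 : ((⌈τ * (K:ℝ)⌉₊ : ℝ)) < τ * K + 1 := Nat.ceil_lt_add_one hd.le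
    have h2 : ((r:ℝ)) + 1 = ((⌈τ * (K:ℝ)⌉₊ : ℝ)) := by exact_mod_cast hr1
    linarith
  have hrK : r < K := by
    have : (r:ℝ) < (K:ℝ) := lt_of_lt_of_le hrlt (by nlinarith)
    exact_mod_cast this
  set m : ℕ := K - r with hmdef
  have hm1 : 1 ≤ m := by omega
  have hmr : m + r = K := by omega
  have hmR : (m:ℝ) = (K:ℝ) - (r:ℝ) := by
    rw [hmdef]; push_cast [Nat.cast_sub hrK.le]; ring
  have hmτ : ε * K < (m:ℝ) := by
    have : ε * (K:ℝ) = (K:ℝ) - τ * K := by rw [hτdef]; ring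
    rw [this, hmR]; linarith
  have hm0 : (0:ℝ) < (m:ℝ) := by exact_mod_cast hm1
  -- counting
  have hsub : (Finset.univ : Finset (Fin K → Fin q)) ⊆
      Code.biUnion (fun c => Finset.univ.filter (fun w => hammingDist w c ≤ r)) := by
    intro w _
    obtain ⟨c, hc, hlt⟩ := hcover w
    refine Finset.mem_biUnion.mpr ⟨c, hc, ?_⟩
    simp only [Finset.mem_filter, Finset.mem_univ, true_and]
    have h1 : (hammingDist w c : ℝ) < ((⌈τ * (K:ℝ)⌉₊ : ℝ)) :=
      lt_of_lt_of_le hlt (Nat.le_ceil _)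
    have h2 : hammingDist w c < ⌈τ * (K:ℝ)⌉₊ := by exact_mod_cast h1
    omega
  have hcount : q ^ K ≤ Code.card * (K.choose r * q ^ r) := by
    calc q ^ K = (Finset.univ : Finset (Fin K → Fin q)).card := by
          simp [Finset.card_univ]
      _ ≤ (Code.biUnion (fun c => Finset.univ.filter (fun w => hammingDist w c ≤ r))).card :=
          Finset.card_le_card hsub
      _ ≤ ∑ c ∈ Code, (Finset.univ.filter (fun w : Fin K → Fin q => hammingDist w c ≤ r)).card :=
          Finset.card_biUnion_le
      _ ≤ ∑ _c ∈ Code, K.choose r * q ^ r :=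
          Finset.sum_le_sum (fun c _ => ball_card_le q K r hrK.le c)
      _ = Code.card * (K.choose r * q ^ r) := by rw [Finset.sum_const, smul_eq_mul]
  have hchoose_symm : K.choose r = K.choose m := by
    rw [hmdef, Nat.choose_symm hrK.le]
  -- real inequality: x^m ≤ Code.card * choose
  have hqm : (x:ℝ) ^ m ≤ (Code.card : ℝ) * (K.choose m : ℝ) := by
    have hcR : (x:ℝ) ^ K ≤ (Code.card : ℝ) * ((K.choose m : ℝ) * x ^ r) := by
      rw [← hchoose_symm, hxdef]
      exact_mod_cast hcount
    have hxr : (0:ℝ) < x ^ r := by positivity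
    have h5 : (x:ℝ) ^ m * x ^ r ≤ ((Code.card : ℝ) * (K.choose m : ℝ)) * x ^ r := by
      have h' : (x:ℝ) ^ m * x ^ r = x ^ K := by rw [← pow_add, hmr]
      rw [h']
      calc (x:ℝ) ^ K ≤ (Code.card : ℝ) * ((K.choose m : ℝ) * x ^ r) := hcR
        _ = (Code.card : ℝ) * (K.choose m : ℝ) * x ^ r := by ring
    exact le_of_mul_le_mul_right h5 hxr
  -- choose bound
  have hfact : ((m:ℝ)) ^ m / (m.factorial : ℝ) ≤ Real.exp m := by
    have h := Real.sum_le_exp_of_nonneg hm0.le (m + 1)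
    refine le_trans ?_ h
    have : ((m:ℝ)) ^ m / (m.factorial : ℝ) =
        (fun i => (m:ℝ) ^ i / (i.factorial : ℝ)) m := rfl
    rw [this]
    exact Finset.single_le_sum (f := fun i => (m:ℝ) ^ i / (i.factorial : ℝ))
      (fun i _ => by positivity) (Finset.self_mem_range_succ m)
  have hchoose : ((K.choose m : ℝ)) ≤ (Real.exp 1 * K / m) ^ m := by
    calc ((K.choose m : ℝ)) ≤ (K:ℝ) ^ m / (m.factorial : ℝ) := Nat.choose_le_pow_div m K
      _ ≤ (Real.exp 1 * K / m) ^ m := by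
        have hm' : ((m:ℝ)) ^ m ≤ (m.factorial : ℝ) * Real.exp 1 ^ m := by
          rw [Real.exp_one_pow]
          have h6 := hfact
          rw [div_le_iff₀ (by positivity : (0:ℝ) < (m.factorial : ℝ))] at h6
          linarith
        rw [div_pow, mul_pow]
        rw [div_le_div_iff₀ (by positivity) (by positivity)]
        calc (K:ℝ) ^ m * (m:ℝ) ^ m ≤ (K:ℝ) ^ m * ((m.factorial : ℝ) * Real.exp 1 ^ m) :=
              mul_le_mul_of_nonneg_left hm' (by positivity)
          _ = Real.exp 1 ^ m * (K:ℝ) ^ m * (m.factorial : ℝ) := by ring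
  -- final chain
  set b : ℝ := Real.log x / (C * Real.exp 1) with hbdef
  have hb1 : 1 ≤ b := by
    rw [hbdef, le_div_iff₀ (by positivity)]
    linarith [hbase]
  have hb0 : (0:ℝ) < b := lt_of_lt_of_le one_pos hb1
  have hbx : b = x * ε / Real.exp 1 := by
    rw [hbdef, hεdef]
    field_simp
  have hlogb : Real.log b = L - (Real.log C + 1) := by
    rw [hbdef, Real.log_div hlogx0.ne' (by positivity),
      Real.log_mul hC.ne' (Real.exp_ne_zero 1), Real.log_exp, hLdef]
  have hmK : m ≤ K := by omega
  have hchoosepos : (0:ℝ) < (K.choose m : ℝ) := by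
    exact_mod_cast Nat.choose_pos hmK
  have hexp_eq : (((K:ℝ) * L) / (2*C*x)) * Real.log x = (ε*(K:ℝ)) * (L/2) := by
    rw [hεdef]
    field_simp
  have heq : (x * (m:ℝ) / (Real.exp 1 * K)) ^ m = x ^ m / ((Real.exp 1 * K / m) ^ m) := by
    rw [← div_pow]
    congr 1
    field_simp
  calc x ^ (((K:ℝ) * L) / (2*C*x))
      = Real.exp ((((K:ℝ) * L) / (2*C*x)) * Real.log x) := by
        rw [Real.rpow_def_of_pos hx0, mul_comm]
    _ = Real.exp ((ε*(K:ℝ)) * (L/2)) := by rw [hexp_eq]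
    _ ≤ Real.exp ((ε*(K:ℝ)) * Real.log b) := by
        apply Real.exp_le_exp.mpr
        apply mul_le_mul_of_nonneg_left _ (by positivity)
        rw [hlogb]
        linarith
    _ = b ^ (ε*(K:ℝ)) := by rw [Real.rpow_def_of_pos hb0, mul_comm]
    _ ≤ b ^ ((m:ℝ):ℝ) := Real.rpow_le_rpow_of_exponent_le hb1 hmτ.le
    _ = b ^ m := Real.rpow_natCast b m
    _ ≤ (x * (m:ℝ) / (Real.exp 1 * K)) ^ m := by
        apply pow_le_pow_left₀ hb0.le _ m
        rw [hbx, div_le_div_iff₀ (by positivity) (by positivity)]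
        nlinarith [mul_le_mul_of_nonneg_left hmτ.le
          (by positivity : (0:ℝ) ≤ x * Real.exp 1)]
    _ ≤ x ^ m / (K.choose m : ℝ) := by
        rw [heq]
        exact div_le_div_of_nonneg_left (by positivity) hchoosepos hchoose
    _ ≤ (Code.card : ℝ) := by
        rw [div_le_iff₀ hchoosepos]
        exact hqm

/-- For every constant `C > 0` and `τ = 1 − log q/(Cq)`, for all sufficiently large `q`
the `q`-ary entropy satisfies `H_q(τ) ≤ 1 − log(log q)/(2Cq)`, and consequently the
Gilbert–Varshamov bound gives, for every `K ≥ 1`, a code of length `K` over an alphabet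
of size `q` with minimum Hamming distance at least `τK` and size at least
`q^{K·log(log q)/(2Cq)}`, i.e. `A_q(K, τK) ≥ q^{K·log(log q)/(2Cq)}`. -/
theorem entropy_bound_and_gv_separation (C : ℝ) (hC : 0 < C) :
    ∃ q₀ : ℕ, ∀ q : ℕ, q₀ ≤ q →
      (qaryEntropy q (1 - Real.log q / (C * q)) ≤
          1 - Real.log (Real.log q) / (2 * C * q)) ∧
      ∀ K : ℕ, 1 ≤ K →
        ∃ Code : Finset (Fin K → Fin q),
          (∀ u ∈ Code, ∀ v ∈ Code, u ≠ v →
              (1 - Real.log q / (C * q)) * K ≤ (hammingDist u v : ℝ)) ∧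
          (q : ℝ) ^ (((K : ℝ) * Real.log (Real.log q)) / (2 * C * q)) ≤ Code.card := by
  have hcast : Filter.Tendsto (fun n : ℕ => (n:ℝ)) Filter.atTop Filter.atTop :=
    tendsto_natCast_atTop_atTop
  have h1 : ∀ᶠ q : ℕ in Filter.atTop, Real.log q / (C * q) ≤ 1/2 := by
    have t : Filter.Tendsto (fun y : ℝ => Real.log y ^ 1 / (C * y + 0))
        Filter.atTop (nhds 0) := Real.tendsto_pow_log_div_mul_add_atTop C 0 1 hC.ne'
    have t2 := (t.comp hcast).eventually (eventually_le_nhds (by norm_num : (0:ℝ) < 1/2))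
    filter_upwards [t2] with q hq
    simpa using hq
  have h2 : ∀ᶠ q : ℕ in Filter.atTop,
      2 * Real.log C + 4 ≤ Real.log (Real.log q) :=
    ((Real.tendsto_log_atTop.comp Real.tendsto_log_atTop).comp hcast).eventually_ge_atTop _
  have h3 : ∀ᶠ q : ℕ in Filter.atTop, C * Real.exp 1 ≤ Real.log q :=
    (Real.tendsto_log_atTop.comp hcast).eventually_ge_atTop _
  have h0 : ∀ᶠ q : ℕ in Filter.atTop, 3 ≤ q := Filter.eventually_ge_atTop 3
  obtain ⟨q₀, hq₀⟩ := Filter.eventually_atTop.mp (((h0.and h1).and h2).and h3)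
  refine ⟨q₀, fun q hq => ?_⟩
  obtain ⟨⟨⟨hq3, hhalf⟩, hLbig⟩, hbase⟩ := hq₀ q hq
  refine ⟨entropy_le C hC q hq3 hhalf hLbig, fun K hK => ?_⟩
  exact gv_size C hC q K hq3 hK hhalf hLbig hbase
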